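/- Suppose x, y, z, w, λ, μ ∈ ℂ and M₁ ∈ ℝ satisfy: (M₁ + 2|x|² + 2|y|² − 2|λ|²)x̄ = 0, (M₁ + 2|x|² + 2|y|² − |λ|²)ȳ = 0, (M₁ + 2|z|² + 2|w|² − |λ|² − |μ|²)z̄ = 0, (M₁ + 2|z|² + 2|w|² − |μ|²)w̄ = 0, together with M₁ = −2|λ|² + 2|x|² + |y|² + |z|², M₁ = −2|μ|² + |z|² + |w|², x z̄ + y w̄ = 0, with xw − yz ≠ 0 and λ ≠ 0, μ ≠ 0, M₁ ≠ 0. Then x = 0, w = 0, |y|² = |μ|² = −2M₁, and |z|² = |λ|² = −3M₁. -/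

import Mathlib

open Complex

/-- The system (6.9)–(6.13) for a rank-2 matrix `[[x,y],[z,w]]`, `λ ≠ 0`, `μ ≠ 0`,
`M₁ ≠ 0` forces `x = 0`, `w = 0`, `|y|² = |μ|² = −2M₁`, `|z|² = |λ|² = −3M₁`. -/
theorem isotropy_order_one_system
    (x y z w lam mu : ℂ) (M₁ : ℝ)
    (hrank : x * w - y * z ≠ 0) (hlam : lam ≠ 0) (hmu : mu ≠ 0) (hM : M₁ ≠ 0)
    (e1 : ((M₁ + 2 * ‖x‖ ^ 2 + 2 * ‖y‖ ^ 2 -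
      2 * ‖lam‖ ^ 2 : ℝ) : ℂ) * (starRingEnd ℂ) x = 0)
    (e2 : ((M₁ + 2 * ‖x‖ ^ 2 + 2 * ‖y‖ ^ 2 -
      ‖lam‖ ^ 2 : ℝ) : ℂ) * (starRingEnd ℂ) y = 0)
    (e3 : ((M₁ + 2 * ‖z‖ ^ 2 + 2 * ‖w‖ ^ 2 -
      ‖lam‖ ^ 2 - ‖mu‖ ^ 2 : ℝ) : ℂ) * (starRingEnd ℂ) z = 0)
    (e4 : ((M₁ + 2 * ‖z‖ ^ 2 + 2 * ‖w‖ ^ 2 -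
      ‖mu‖ ^ 2 : ℝ) : ℂ) * (starRingEnd ℂ) w = 0)
    (e5 : M₁ = -2 * ‖lam‖ ^ 2 + 2 * ‖x‖ ^ 2 +
      ‖y‖ ^ 2 + ‖z‖ ^ 2)
    (e6 : M₁ = -2 * ‖mu‖ ^ 2 + ‖z‖ ^ 2 + ‖w‖ ^ 2)
    (e7 : x * (starRingEnd ℂ) z + y * (starRingEnd ℂ) w = 0) :
    x = 0 ∧ w = 0 ∧
      ‖y‖ ^ 2 = -2 * M₁ ∧ ‖mu‖ ^ 2 = -2 * M₁ ∧
      ‖z‖ ^ 2 = -3 * M₁ ∧ ‖lam‖ ^ 2 = -3 * M₁ := by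
  have hlam2 : 0 < ‖lam‖ ^ 2 := pow_pos (norm_pos_iff.mpr hlam) 2
  have hmu2 : 0 < ‖mu‖ ^ 2 := pow_pos (norm_pos_iff.mpr hmu) 2
  have h1 : (M₁ + 2 * ‖x‖ ^ 2 + 2 * ‖y‖ ^ 2 -
      2 * ‖lam‖ ^ 2 = 0) ∨ x = 0 := by
    rcases mul_eq_zero.1 e1 with h | h
    · left; exact_mod_cast h
    · right; exact (map_eq_zero _).mp h
  have h2 : (M₁ + 2 * ‖x‖ ^ 2 + 2 * ‖y‖ ^ 2 -
      ‖lam‖ ^ 2 = 0) ∨ y = 0 := by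
    rcases mul_eq_zero.1 e2 with h | h
    · left; exact_mod_cast h
    · right; exact (map_eq_zero _).mp h
  have h3 : (M₁ + 2 * ‖z‖ ^ 2 + 2 * ‖w‖ ^ 2 -
      ‖lam‖ ^ 2 - ‖mu‖ ^ 2 = 0) ∨ z = 0 := by
    rcases mul_eq_zero.1 e3 with h | h
    · left; exact_mod_cast h
    · right; exact (map_eq_zero _).mp h
  have h4 : (M₁ + 2 * ‖z‖ ^ 2 + 2 * ‖w‖ ^ 2 -
      ‖mu‖ ^ 2 = 0) ∨ w = 0 := by
    rcases mul_eq_zero.1 e4 with h | h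
    · left; exact_mod_cast h
    · right; exact (map_eq_zero _).mp h
  -- x = 0 or y = 0
  have hxy : x = 0 ∨ y = 0 := by
    rcases h1 with h1 | h1
    · rcases h2 with h2 | h2
      · exfalso; linarith
      · exact Or.inr h2
    · exact Or.inl h1
  have hzw : z = 0 ∨ w = 0 := by
    rcases h3 with h3 | h3
    · rcases h4 with h4 | h4
      · exfalso; linarith
      · exact Or.inr h4
    · exact Or.inl h3
  rcases hxy with hx | hy
  · rcases hzw with hz | hw
    · exfalso; exact hrank (by rw [hx, hz]; ring)
    · -- x = 0, w = 0: the good case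
      have hy : y ≠ 0 := by
        intro h; exact hrank (by rw [hx, h]; ring)
      have hz : z ≠ 0 := by
        intro h; exact hrank (by rw [h, hw]; ring)
      have hc2 : M₁ + 2 * ‖x‖ ^ 2 + 2 * ‖y‖ ^ 2 -
          ‖lam‖ ^ 2 = 0 := by
        rcases h2 with h | h; · exact h
        · exact absurd h hy
      have hc3 : M₁ + 2 * ‖z‖ ^ 2 + 2 * ‖w‖ ^ 2 -
          ‖lam‖ ^ 2 - ‖mu‖ ^ 2 = 0 := by
        rcases h3 with h | h; · exact h
        · exact absurd h hz
      have hax : ‖x‖ ^ 2 = 0 := by simp [hx]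
      have haw : ‖w‖ ^ 2 = 0 := by simp [hw]
      exact ⟨hx, hw, by linarith, by linarith, by linarith, by linarith⟩
  · rcases hzw with hz | hw
    · -- y = 0, z = 0: contradiction with M₁ ≠ 0
      exfalso
      have hx : x ≠ 0 := by
        intro h; exact hrank (by rw [h, hz]; ring)
      have hc1 : M₁ + 2 * ‖x‖ ^ 2 + 2 * ‖y‖ ^ 2 -
          2 * ‖lam‖ ^ 2 = 0 := by
        rcases h1 with h | h; · exact h
        · exact absurd h hx
      have hay : ‖y‖ ^ 2 = 0 := by simp [hy]
      have haz : ‖z‖ ^ 2 = 0 := by simp [hz]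
      exact hM (by linarith)
    · exfalso; exact hrank (by rw [hy, hw]; ring)
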